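/- arXiv:2511.21447 — 3 statements merged into one kernel-verified Lean document; each statement's English description precedes it below -/
import Mathlib

section
/- Abstract version of Lemma 2.4: let A, B, F ∈ ℝ denote ‖(u,v)‖^p, ∫_Ω h|u|^r|v|^s, and λ∫_Ω f|u|^q + μ∫_Ω g|v|^q respectively, with A > 0. Suppose (p-q)A = (r+s-q)B and (r+s-p)A = (r+s-q)F, together with the estimates B ≤ C₁ A^{(r+s)/p} and F ≤ C₂ A^{q/p} for constants C₁, C₂ > 0 (Sobolev embedding bounds). Then A ≥ ((p-q)/((r+s-q)C₁))^{p/(r+s-p)} and A ≤ ((r+s-q)C₂/(r+s-p))^{p/(p-q)}. Consequently, if C₂ is small enough (depending on C₁, p, q, r, s), no such A > 0 exists. -/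
open Real

lemma low_bound {p q rs A C₁ : ℝ} (hq : 0 < q) (hqp : q < p) (hprs : p < rs)
    (hA : 0 < A) (hC₁ : 0 < C₁)
    (h : (p - q) * A ≤ (rs - q) * (C₁ * A ^ (rs / p))) :
    ((p - q) / ((rs - q) * C₁)) ^ (p / (rs - p)) ≤ A := by
  have hp : 0 < p := hq.trans hqp
  have hrsp : 0 < rs - p := by linarith
  have hrsq : 0 < rs - q := by linarith
  have hpq : 0 < p - q := by linarith
  have hsplit : A ^ (rs / p) = A * A ^ ((rs - p) / p) := by
    have h1 : rs / p = 1 + (rs - p) / p := by field_simp; ring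
    rw [h1, Real.rpow_add hA, Real.rpow_one]
  rw [hsplit] at h
  have hpow : 0 < A ^ ((rs - p) / p) := Real.rpow_pos_of_pos hA _
  have step : (p - q) ≤ (rs - q) * C₁ * A ^ ((rs - p) / p) := by nlinarith
  have hK : (p - q) / ((rs - q) * C₁) ≤ A ^ ((rs - p) / p) := by
    rw [div_le_iff₀ (by positivity)]; nlinarith
  have := Real.rpow_le_rpow (by positivity) hK (le_of_lt (by positivity : (0:ℝ) < p / (rs - p)))
  rwa [← Real.rpow_mul hA.le, show (rs - p) / p * (p / (rs - p)) = 1 by field_simp,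
    Real.rpow_one] at this

lemma up_bound {p q rs A C₂ : ℝ} (hq : 0 < q) (hqp : q < p) (hprs : p < rs)
    (hA : 0 < A) (hC₂ : 0 < C₂)
    (h : (rs - p) * A ≤ (rs - q) * (C₂ * A ^ (q / p))) :
    A ≤ ((rs - q) * C₂ / (rs - p)) ^ (p / (p - q)) := by
  have hp : 0 < p := hq.trans hqp
  have hrsp : 0 < rs - p := by linarith
  have hrsq : 0 < rs - q := by linarith
  have hpq : 0 < p - q := by linarith
  have hsplit : A = A ^ (q / p) * A ^ ((p - q) / p) := by
    rw [← Real.rpow_add hA, show q / p + (p - q) / p = 1 by field_simp; ring, Real.rpow_one]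
  have hpow : 0 < A ^ (q / p) := Real.rpow_pos_of_pos hA _
  have h' : (rs - p) * (A ^ (q / p) * A ^ ((p - q) / p)) ≤ (rs - q) * (C₂ * A ^ (q / p)) := by
    rw [← hsplit]; exact h
  have step : (rs - p) * A ^ ((p - q) / p) ≤ (rs - q) * C₂ := by nlinarith
  have hK : A ^ ((p - q) / p) ≤ (rs - q) * C₂ / (rs - p) := by
    rw [le_div_iff₀ hrsp]; nlinarith
  have := Real.rpow_le_rpow (by positivity) hK (le_of_lt (by positivity : (0:ℝ) < p / (p - q)))
  rwa [← Real.rpow_mul hA.le, show (p - q) / p * (p / (p - q)) = 1 by field_simp,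
    Real.rpow_one] at this

/-- abstract version of Lemma 2.4.  With `A = ‖(u,v)‖^p`,
`B = ∫_Ω h|u|^r|v|^s` and `F = λ∫_Ω f|u|^q + μ∫_Ω g|v|^q`, the identities on the
degenerate Nehari set together with the Sobolev-embedding bounds force both a
lower and an upper bound on `A`; consequently, if `C₂` is small enough
(depending on `C₁, p, q, r, s`), no such `A > 0` exists. -/
theorem stmt_6 (p q r s A B F C₁ C₂ : ℝ)
    (hq : 1 < q) (hqp : q < p) (hprs : p < r + s)
    (hA : 0 < A) (hC₁ : 0 < C₁) (hC₂ : 0 < C₂)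
    (h1 : (p - q) * A = (r + s - q) * B)
    (h2 : (r + s - p) * A = (r + s - q) * F)
    (hB : B ≤ C₁ * A ^ ((r + s) / p))
    (hF : F ≤ C₂ * A ^ (q / p)) :
    (((p - q) / ((r + s - q) * C₁)) ^ (p / (r + s - p)) ≤ A ∧
      A ≤ (((r + s - q) * C₂) / (r + s - p)) ^ (p / (p - q))) ∧
    ∃ ε > 0, ∀ C₂' A' B' F', 0 < C₂' → C₂' < ε → 0 < A' →
      (p - q) * A' = (r + s - q) * B' →
      (r + s - p) * A' = (r + s - q) * F' →
      B' ≤ C₁ * A' ^ ((r + s) / p) →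
      F' ≤ C₂' * A' ^ (q / p) → False := by
  have hq0 : 0 < q := by linarith
  have hp : 0 < p := by linarith
  have hrsq : 0 < r + s - q := by linarith
  have hrsp : 0 < r + s - p := by linarith
  have hpq : 0 < p - q := by linarith
  set L : ℝ := ((p - q) / ((r + s - q) * C₁)) ^ (p / (r + s - p)) with hL
  have hLpos : 0 < L := Real.rpow_pos_of_pos (by positivity) _
  refine ⟨⟨?_, ?_⟩, ?_⟩
  · exact low_bound hq0 hqp hprs hA hC₁ (by
      calc (p - q) * A = (r + s - q) * B := h1
        _ ≤ (r + s - q) * (C₁ * A ^ ((r + s) / p)) := by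
            exact mul_le_mul_of_nonneg_left hB hrsq.le)
  · exact up_bound hq0 hqp hprs hA hC₂ (by
      calc (r + s - p) * A = (r + s - q) * F := h2
        _ ≤ (r + s - q) * (C₂ * A ^ (q / p)) := mul_le_mul_of_nonneg_left hF hrsq.le)
  · refine ⟨(r + s - p) / (r + s - q) * L ^ ((p - q) / p), by positivity,
      fun C₂' A' B' F' hC₂' hlt hA' h1' h2' hB' hF' => ?_⟩
    have hlow : L ≤ A' := low_bound hq0 hqp hprs hA' hC₁ (by
      calc (p - q) * A' = (r + s - q) * B' := h1'
        _ ≤ (r + s - q) * (C₁ * A' ^ ((r + s) / p)) := mul_le_mul_of_nonneg_left hB' hrsq.le)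
    have hup : A' ≤ ((r + s - q) * C₂' / (r + s - p)) ^ (p / (p - q)) :=
      up_bound hq0 hqp hprs hA' hC₂' (by
        calc (r + s - p) * A' = (r + s - q) * F' := h2'
          _ ≤ (r + s - q) * (C₂' * A' ^ (q / p)) := mul_le_mul_of_nonneg_left hF' hrsq.le)
    have hbase : (r + s - q) * C₂' / (r + s - p) < L ^ ((p - q) / p) := by
      rw [div_lt_iff₀ hrsp]
      calc (r + s - q) * C₂' < (r + s - q) * ((r + s - p) / (r + s - q) * L ^ ((p - q) / p)) :=
            by exact mul_lt_mul_of_pos_left hlt hrsq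
        _ = L ^ ((p - q) / p) * (r + s - p) := by field_simp
    have hcontra : ((r + s - q) * C₂' / (r + s - p)) ^ (p / (p - q)) < L := by
      have := Real.rpow_lt_rpow
        (div_nonneg (mul_nonneg hrsq.le hC₂'.le) hrsp.le) hbase
        (div_pos hp hpq)
      rwa [← Real.rpow_mul hLpos.le, show (p - q) / p * (p / (p - q)) = 1 by
        rw [div_mul_div_comm, mul_comm p (p - q)]; exact div_self (by positivity),
        Real.rpow_one] at this
    linarith
end

section
/- With φ and m as above (a, c > 0, 1 < q < p < r+s), if 0 < b < m(t_max) = a^{(r+s-q)/(r+s-p)} c^{-(p-q)/(r+s-p)} ((p-q)/(r+s-q))^{(p-q)/(r+s-p)} ((r+s-p)/(r+s-q)), then the equation m(t) = b has exactly two positive solutions t₁ < t_max < t₂; φ has a local minimum at t₁ and a local maximum at t₂. -/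
open Real

section auxmf

private lemma mfun_cont (a c u v : ℝ) (hu : 0 ≤ u) (hv : 0 ≤ v) :
    Continuous (fun t : ℝ => a * t ^ u - c * t ^ v) :=
  ((continuous_const.mul (Real.continuous_rpow_const hu)).sub
    (continuous_const.mul (Real.continuous_rpow_const hv)))

private lemma mfun_hasDeriv (a c u v : ℝ) {t : ℝ} (ht : 0 < t) :
    HasDerivAt (fun t : ℝ => a * t ^ u - c * t ^ v)
      (t ^ (u - 1) * (a * u - c * v * t ^ (v - u))) t := by
  have h1 : HasDerivAt (fun t : ℝ => a * t ^ u) (a * (u * t ^ (u - 1))) t :=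
    (Real.hasDerivAt_rpow_const (Or.inl ht.ne')).const_mul a
  have h2 : HasDerivAt (fun t : ℝ => c * t ^ v) (c * (v * t ^ (v - 1))) t :=
    (Real.hasDerivAt_rpow_const (Or.inl ht.ne')).const_mul c
  have key : t ^ (v - 1) = t ^ (u - 1) * t ^ (v - u) := by
    rw [← Real.rpow_add ht]; ring_nf
  have := h1.sub h2
  refine this.congr_deriv ?_
  rw [key]; ring

private lemma mfun_mono (a c u v : ℝ) (ha : 0 < a) (hc : 0 < c) (hu : 0 < u) (huv : u < v) :
    StrictMonoOn (fun t : ℝ => a * t ^ u - c * t ^ v)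
      (Set.Icc 0 ((a * u / (c * v)) ^ ((1:ℝ)/(v - u)))) := by
  have hv : 0 < v := hu.trans huv
  have hK : 0 < a * u / (c * v) := by positivity
  apply strictMonoOn_of_deriv_pos (convex_Icc _ _)
    ((mfun_cont a c u v hu.le hv.le).continuousOn)
  intro t ht
  rw [interior_Icc] at ht
  rw [(mfun_hasDeriv a c u v ht.1).deriv]
  have h1 : t ^ (v - u) < a * u / (c * v) := by
    have := (Real.lt_rpow_inv_iff_of_pos ht.1.le hK.le (by linarith : (0:ℝ) < v - u)).1
      (by rw [← one_div]; exact ht.2)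
    exact this
  have h2 : c * v * t ^ (v - u) < a * u := by
    have := (lt_div_iff₀ (by positivity : (0:ℝ) < c * v)).1 h1
    linarith
  have h3 : (0:ℝ) < t ^ (u - 1) := Real.rpow_pos_of_pos ht.1 _
  nlinarith

private lemma mfun_anti (a c u v : ℝ) (ha : 0 < a) (hc : 0 < c) (hu : 0 < u) (huv : u < v) :
    StrictAntiOn (fun t : ℝ => a * t ^ u - c * t ^ v)
      (Set.Ici ((a * u / (c * v)) ^ ((1:ℝ)/(v - u)))) := by
  have hv : 0 < v := hu.trans huv
  have hK : 0 < a * u / (c * v) := by positivity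
  have htm : 0 < (a * u / (c * v)) ^ ((1:ℝ)/(v - u)) := Real.rpow_pos_of_pos hK _
  apply strictAntiOn_of_deriv_neg (convex_Ici _)
    ((mfun_cont a c u v hu.le hv.le).continuousOn)
  intro t ht
  rw [interior_Ici] at ht
  have ht0 : 0 < t := htm.trans ht
  rw [(mfun_hasDeriv a c u v ht0).deriv]
  have h1 : a * u / (c * v) < t ^ (v - u) := by
    have := (Real.rpow_inv_lt_iff_of_pos hK.le ht0.le (by linarith : (0:ℝ) < v - u)).1
      (by rw [← one_div]; exact ht)
    exact this
  have h2 : a * u < c * v * t ^ (v - u) := by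
    have := (div_lt_iff₀ (by positivity : (0:ℝ) < c * v)).1 h1
    linarith
  have h3 : (0:ℝ) < t ^ (u - 1) := Real.rpow_pos_of_pos ht0 _
  nlinarith

private lemma mfun_at_max (a c u v : ℝ) (ha : 0 < a) (hc : 0 < c) (hu : 0 < u) (huv : u < v) :
    a * ((a * u / (c * v)) ^ ((1:ℝ)/(v - u))) ^ u
      - c * ((a * u / (c * v)) ^ ((1:ℝ)/(v - u))) ^ v
    = a ^ (v/(v-u)) * c ^ (-u/(v-u)) * (u/v) ^ (u/(v-u)) * ((v-u)/v) := by
  have hv : 0 < v := hu.trans huv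
  have hvu : (0:ℝ) < v - u := by linarith
  set K := a * u / (c * v) with hKdef
  have hK : 0 < K := by positivity
  have e1 : (K ^ ((1:ℝ)/(v - u))) ^ u = K ^ (u/(v-u)) := by
    rw [← Real.rpow_mul hK.le]
    congr 1
    field_simp
  have e2 : (K ^ ((1:ℝ)/(v - u))) ^ v = K ^ (u/(v-u)) * K := by
    rw [← Real.rpow_mul hK.le,
      show (1:ℝ)/(v - u) * v = u/(v-u) + 1 by field_simp; ring,
      Real.rpow_add hK, Real.rpow_one]
  rw [e1, e2]
  have e3 : a * K ^ (u/(v-u)) - c * (K ^ (u/(v-u)) * K) = K ^ (u/(v-u)) * (a * ((v-u)/v)) := by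
    have : c * K = a * u / v := by
      rw [hKdef]; field_simp
    have h4 : a - c * K = a * ((v-u)/v) := by
      rw [this]; field_simp
    nlinarith [Real.rpow_pos_of_pos hK (u/(v-u))]
  rw [e3]
  have e5 : K = (a/c) * (u/v) := by rw [hKdef]; field_simp
  have e6 : K ^ (u/(v-u)) = a ^ (u/(v-u)) * c ^ (-(u/(v-u))) * (u/v) ^ (u/(v-u)) := by
    rw [e5, Real.mul_rpow (by positivity) (by positivity),
      Real.div_rpow ha.le hc.le, Real.rpow_neg hc.le, div_eq_mul_inv]
  rw [e6]
  have e7 : a ^ (u/(v-u)) * a = a ^ (v/(v-u)) := by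
    rw [show v/(v-u) = u/(v-u) + 1 by field_simp; ring,
      Real.rpow_add ha, Real.rpow_one]
  rw [← e7, neg_div]
  ring

private lemma phi_hasDeriv (a b c p q e : ℝ) (hp : p ≠ 0) (hq : q ≠ 0) (he : e ≠ 0)
    {t : ℝ} (ht : 0 < t) :
    HasDerivAt (fun t : ℝ => (a/p) * t ^ p - (b/q) * t ^ q - (c/e) * t ^ e)
      (t ^ (q - 1) * ((a * t ^ (p - q) - c * t ^ (e - q)) - b)) t := by
  have h1 : HasDerivAt (fun t : ℝ => (a/p) * t ^ p) ((a/p) * (p * t ^ (p - 1))) t :=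
    (Real.hasDerivAt_rpow_const (Or.inl ht.ne')).const_mul (a/p)
  have h2 : HasDerivAt (fun t : ℝ => (b/q) * t ^ q) ((b/q) * (q * t ^ (q - 1))) t :=
    (Real.hasDerivAt_rpow_const (Or.inl ht.ne')).const_mul (b/q)
  have h3 : HasDerivAt (fun t : ℝ => (c/e) * t ^ e) ((c/e) * (e * t ^ (e - 1))) t :=
    (Real.hasDerivAt_rpow_const (Or.inl ht.ne')).const_mul (c/e)
  have := (h1.sub h2).sub h3
  refine this.congr_deriv ?_
  have k1 : t ^ (p - 1) = t ^ (q - 1) * t ^ (p - q) := by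
    rw [← Real.rpow_add ht]; ring_nf
  have k2 : t ^ (e - 1) = t ^ (q - 1) * t ^ (e - q) := by
    rw [← Real.rpow_add ht]; ring_nf
  rw [k1, k2]
  field_simp
  ring

end auxmf


/-- if `0 < b < m(t_max)`, where
`m(t) = a t^{p-q} - c t^{r+s-q}`, `t_max = (a(p-q)/(c(r+s-q)))^{1/(r+s-p)}` and
`m(t_max) = a^{(r+s-q)/(r+s-p)} c^{-(p-q)/(r+s-p)} ((p-q)/(r+s-q))^{(p-q)/(r+s-p)} ((r+s-p)/(r+s-q))`,
then `m(t) = b` has exactly two positive solutions `t₁ < t_max < t₂`, and the fibering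
map `φ(t) = (a/p)t^p - (b/q)t^q - (c/(r+s))t^{r+s}` has a local minimum at `t₁` and a
local maximum at `t₂`. -/
theorem stmt_9 (a b c p q r s : ℝ)
    (ha : 0 < a) (hc : 0 < c)
    (hq : 1 < q) (hqp : q < p) (hprs : p < r + s)
    (hb : 0 < b)
    (hb2 : b < a ^ ((r + s - q) / (r + s - p)) * c ^ (-(p - q) / (r + s - p))
        * ((p - q) / (r + s - q)) ^ ((p - q) / (r + s - p)) * ((r + s - p) / (r + s - q))) :
    ∃ t₁ t₂ : ℝ, 0 < t₁ ∧
      t₁ < ((a * (p - q)) / (c * (r + s - q))) ^ ((1 : ℝ) / (r + s - p)) ∧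
      ((a * (p - q)) / (c * (r + s - q))) ^ ((1 : ℝ) / (r + s - p)) < t₂ ∧
      a * t₁ ^ (p - q) - c * t₁ ^ (r + s - q) = b ∧
      a * t₂ ^ (p - q) - c * t₂ ^ (r + s - q) = b ∧
      (∀ t : ℝ, 0 < t → a * t ^ (p - q) - c * t ^ (r + s - q) = b → t = t₁ ∨ t = t₂) ∧
      IsLocalMin (fun t : ℝ => (a / p) * t ^ p - (b / q) * t ^ q - (c / (r + s)) * t ^ (r + s)) t₁ ∧
      IsLocalMax (fun t : ℝ => (a / p) * t ^ p - (b / q) * t ^ q - (c / (r + s)) * t ^ (r + s)) t₂ := by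
  have hu : (0:ℝ) < p - q := by linarith
  have huv : p - q < r + s - q := by linarith
  have hvu : (0:ℝ) < r + s - p := by linarith
  have hediff : (r + s - q) - (p - q) = r + s - p := by ring
  set m : ℝ → ℝ := fun t => a * t ^ (p - q) - c * t ^ (r + s - q) with hm
  set tm : ℝ := ((a * (p - q)) / (c * (r + s - q))) ^ ((1 : ℝ) / (r + s - p)) with htmdef
  have hKpos : 0 < a * (p - q) / (c * (r + s - q)) := by
    apply div_pos (by nlinarith) (by nlinarith)
  have htm : 0 < tm := Real.rpow_pos_of_pos hKpos _
  have hmono : StrictMonoOn m (Set.Icc 0 tm) := by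
    have := mfun_mono a c (p - q) (r + s - q) ha hc hu huv
    rwa [hediff] at this
  have hanti : StrictAntiOn m (Set.Ici tm) := by
    have := mfun_anti a c (p - q) (r + s - q) ha hc hu huv
    rwa [hediff] at this
  have hval : m tm = a ^ ((r + s - q) / (r + s - p)) * c ^ (-(p - q) / (r + s - p))
      * ((p - q) / (r + s - q)) ^ ((p - q) / (r + s - p)) * ((r + s - p) / (r + s - q)) := by
    have := mfun_at_max a c (p - q) (r + s - q) ha hc hu huv
    rw [hediff] at this
    exact this
  have hbtm : b < m tm := by rw [hval]; exact hb2
  have hmcont : Continuous m := mfun_cont a c (p - q) (r + s - q) hu.le (by linarith)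
  have hm0 : m 0 = 0 := by
    simp only [hm, Real.zero_rpow hu.ne', Real.zero_rpow (by linarith : r + s - q ≠ 0)]
    ring
  -- first solution t₁
  obtain ⟨t₁, ht₁mem, ht₁⟩ :=
    intermediate_value_Icc htm.le hmcont.continuousOn (by rw [hm0]; exact ⟨hb.le, hbtm.le⟩)
  have ht₁pos : 0 < t₁ := by
    rcases lt_or_eq_of_le ht₁mem.1 with h | h
    · exact h
    · exfalso; rw [← h] at ht₁; rw [hm0] at ht₁; linarith
  have ht₁lt : t₁ < tm := by
    rcases lt_or_eq_of_le ht₁mem.2 with h | h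
    · exact h
    · exfalso; rw [h] at ht₁; linarith
  -- second solution t₂
  set X : ℝ := (a / c) ^ ((1:ℝ)/(r + s - p)) with hXdef
  have hX : 0 < X := Real.rpow_pos_of_pos (by positivity) _
  set T : ℝ := tm + 1 + X with hTdef
  have hTtm : tm < T := by linarith
  have hT0 : 0 < T := by linarith
  have hXT : X < T := by linarith
  have hac : a / c < T ^ (r + s - p) := by
    have e1 : X ^ (r + s - p) = a / c := by
      rw [hXdef, one_div, Real.rpow_inv_rpow (by positivity) hvu.ne']
    rw [← e1]
    exact Real.rpow_lt_rpow hX.le hXT hvu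
  have hmT : m T < 0 := by
    have k : T ^ (r + s - q) = T ^ (p - q) * T ^ (r + s - p) := by
      rw [← Real.rpow_add hT0]; ring_nf
    have h1 : 0 < T ^ (p - q) := Real.rpow_pos_of_pos hT0 _
    have h2 : a < c * T ^ (r + s - p) := by
      have := (div_lt_iff₀ hc).1 hac
      linarith
    simp only [hm, k]
    nlinarith
  obtain ⟨t₂, ht₂mem, ht₂⟩ :=
    intermediate_value_Icc' hTtm.le hmcont.continuousOn ⟨by linarith, hbtm.le⟩
  have ht₂gt : tm < t₂ := by
    rcases lt_or_eq_of_le ht₂mem.1 with h | h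
    · exact h
    · exfalso; rw [← h] at ht₂; linarith
  have h₁₂ : t₁ < t₂ := ht₁lt.trans ht₂gt
  -- uniqueness
  have huniq : ∀ t : ℝ, 0 < t → m t = b → t = t₁ ∨ t = t₂ := by
    intro t ht hteq
    rcases le_or_gt t tm with h | h
    · left
      exact hmono.injOn ⟨ht.le, h⟩ ⟨ht₁mem.1, ht₁lt.le⟩ (hteq.trans ht₁.symm)
    · right
      exact hanti.injOn (Set.mem_Ici.2 h.le) (Set.mem_Ici.2 ht₂gt.le) (hteq.trans ht₂.symm)
  -- the fibering map
  set φ : ℝ → ℝ := fun t => (a / p) * t ^ p - (b / q) * t ^ q - (c / (r + s)) * t ^ (r + s)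
    with hφ
  have hp0 : p ≠ 0 := ne_of_gt (by linarith)
  have hq0 : q ≠ 0 := ne_of_gt (by linarith)
  have he0 : r + s ≠ 0 := ne_of_gt (by linarith)
  have hφcont : Continuous φ := by
    rw [hφ]
    exact ((continuous_const.mul (Real.continuous_rpow_const (by linarith))).sub
      (continuous_const.mul (Real.continuous_rpow_const (by linarith)))).sub
      (continuous_const.mul (Real.continuous_rpow_const (by linarith)))
  have hφderiv : ∀ t : ℝ, 0 < t → deriv φ t = t ^ (q - 1) * (m t - b) := by
    intro t ht
    exact (phi_hasDeriv a b c p q (r + s) hp0 hq0 he0 ht).deriv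
  -- φ strictly decreasing on [t₁/2, t₁]
  have hA1 : StrictAntiOn φ (Set.Icc (t₁/2) t₁) := by
    apply strictAntiOn_of_deriv_neg (convex_Icc _ _) hφcont.continuousOn
    intro x hx
    rw [interior_Icc] at hx
    have hx0 : 0 < x := lt_trans (by linarith) hx.1
    rw [hφderiv x hx0]
    have hmx : m x < b := by
      have := hmono ⟨hx0.le, (hx.2.trans ht₁lt).le⟩ ⟨ht₁mem.1, ht₁lt.le⟩ hx.2
      rwa [ht₁] at this
    exact mul_neg_of_pos_of_neg (Real.rpow_pos_of_pos hx0 _) (by linarith)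
  -- φ strictly increasing on [t₁, t₂]
  have hM : StrictMonoOn φ (Set.Icc t₁ t₂) := by
    apply strictMonoOn_of_deriv_pos (convex_Icc _ _) hφcont.continuousOn
    intro x hx
    rw [interior_Icc] at hx
    have hx0 : 0 < x := ht₁pos.trans hx.1
    rw [hφderiv x hx0]
    have hmx : b < m x := by
      rcases le_or_gt x tm with h | h
      · have := hmono ⟨ht₁mem.1, ht₁lt.le⟩ ⟨hx0.le, h⟩ hx.1
        rwa [ht₁] at this
      · have := hanti (Set.mem_Ici.2 h.le) (Set.mem_Ici.2 ht₂gt.le) hx.2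
        rwa [ht₂] at this
    exact mul_pos (Real.rpow_pos_of_pos hx0 _) (by linarith)
  -- φ strictly decreasing on [t₂, t₂+1]
  have hA2 : StrictAntiOn φ (Set.Icc t₂ (t₂ + 1)) := by
    apply strictAntiOn_of_deriv_neg (convex_Icc _ _) hφcont.continuousOn
    intro x hx
    rw [interior_Icc] at hx
    have hx0 : 0 < x := by have := ht₁pos.trans h₁₂; linarith [hx.1]
    rw [hφderiv x hx0]
    have hmx : m x < b := by
      have := hanti (Set.mem_Ici.2 ht₂gt.le) (Set.mem_Ici.2 (by linarith [hx.1] : tm ≤ x)) hx.1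
      rwa [ht₂] at this
    exact mul_neg_of_pos_of_neg (Real.rpow_pos_of_pos hx0 _) (by linarith)
  refine ⟨t₁, t₂, ht₁pos, ht₁lt, ht₂gt, ht₁, ht₂, huniq, ?_, ?_⟩
  · -- local min at t₁
    apply Filter.eventually_of_mem (Ioo_mem_nhds (by linarith : t₁/2 < t₁) h₁₂)
    intro x hx
    rcases le_total x t₁ with h | h
    · exact hA1.antitoneOn ⟨hx.1.le, h⟩ ⟨by linarith, le_rfl⟩ h
    · exact hM.monotoneOn ⟨le_rfl, h₁₂.le⟩ ⟨h, hx.2.le⟩ h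
  · -- local max at t₂
    apply Filter.eventually_of_mem (Ioo_mem_nhds h₁₂ (by linarith : t₂ < t₂ + 1))
    intro x hx
    rcases le_total x t₂ with h | h
    · exact hM.monotoneOn ⟨hx.1.le, h⟩ ⟨h₁₂.le, le_rfl⟩ h
    · exact hA2.antitoneOn ⟨le_rfl, by linarith⟩ ⟨h, hx.2.le⟩ h
end

section
/- If (u,v) ∈ M⁺_{λ,μ} (Nehari constraint with ⟨ψ',(u,v)⟩ > 0), then J_{λ,μ}(u,v) < 0. Consequently α⁺_{λ,μ} = inf_{M⁺_{λ,μ}} J_{λ,μ} < 0 whenever M⁺_{λ,μ} ≠ ∅. -/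
open MeasureTheory Real

/-- `‖(u,v)‖^p = ∫_Ω |∇u|^p + ∫_Ω |∇v|^p`. -/
noncomputable def normP {N : ℕ} (Ω : Set (EuclideanSpace ℝ (Fin N))) (p : ℝ)
    (u v : EuclideanSpace ℝ (Fin N) → ℝ) : ℝ :=
  (∫ x in Ω, ‖gradient u x‖ ^ p) + ∫ x in Ω, ‖gradient v x‖ ^ p

/-- `λ∫_Ω f|u|^q + μ∫_Ω g|v|^q`. -/
noncomputable def qTerm {N : ℕ} (Ω : Set (EuclideanSpace ℝ (Fin N))) (q lam mu : ℝ)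
    (f g u v : EuclideanSpace ℝ (Fin N) → ℝ) : ℝ :=
  lam * (∫ x in Ω, f x * |u x| ^ q) + mu * ∫ x in Ω, g x * |v x| ^ q

/-- `∫_Ω h|u|^r|v|^s`. -/
noncomputable def hTerm {N : ℕ} (Ω : Set (EuclideanSpace ℝ (Fin N))) (r s : ℝ)
    (h u v : EuclideanSpace ℝ (Fin N) → ℝ) : ℝ :=
  ∫ x in Ω, h x * |u x| ^ r * |v x| ^ s

/-- The energy functional `J_{λ,μ}`. -/
noncomputable def Jfun {N : ℕ} (Ω : Set (EuclideanSpace ℝ (Fin N))) (p q r s lam mu : ℝ)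
    (f g h u v : EuclideanSpace ℝ (Fin N) → ℝ) : ℝ :=
  (1 / p) * normP Ω p u v - (1 / q) * qTerm Ω q lam mu f g u v
    - (1 / (r + s)) * hTerm Ω r s h u v

/-- The pairing `⟨ψ'_{λ,μ}(u,v),(u,v)⟩ = p‖(u,v)‖^p - q(λ∫f|u|^q + μ∫g|v|^q)
  - (r+s)∫h|u|^r|v|^s`. -/
noncomputable def psiPair {N : ℕ} (Ω : Set (EuclideanSpace ℝ (Fin N))) (p q r s lam mu : ℝ)
    (f g h u v : EuclideanSpace ℝ (Fin N) → ℝ) : ℝ :=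
  p * normP Ω p u v - q * qTerm Ω q lam mu f g u v - (r + s) * hTerm Ω r s h u v

/-- if `(u,v) ∈ M⁺_{λ,μ}` (nonzero, Nehari constraint and
`⟨ψ'(u,v),(u,v)⟩ > 0`), then `J_{λ,μ}(u,v) < 0`; consequently the infimum
`α⁺_{λ,μ}` of `J_{λ,μ}` over `M⁺_{λ,μ}` is negative whenever `M⁺_{λ,μ} ≠ ∅`. -/
theorem stmt_10 {N : ℕ} (Ω : Set (EuclideanSpace ℝ (Fin N)))
    (hΩ : Bornology.IsBounded Ω)
    (p q r s lam mu : ℝ) (f g h u v : EuclideanSpace ℝ (Fin N) → ℝ)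
    (hf : ContinuousOn f (closure Ω)) (hg : ContinuousOn g (closure Ω))
    (hh : ContinuousOn h (closure Ω))
    (hq : 1 < q) (hqp : q < p) (hprs : p < r + s)
    (hnz : ¬(u = 0 ∧ v = 0)) (hpos : 0 < normP Ω p u v)
    (hNehari : normP Ω p u v = qTerm Ω q lam mu f g u v + hTerm Ω r s h u v)
    (hplus : 0 < psiPair Ω p q r s lam mu f g h u v) :
    Jfun Ω p q r s lam mu f g h u v
      < -((p - q) * (r + s - p) / (p * q * (r + s))) * normP Ω p u v ∧
    Jfun Ω p q r s lam mu f g h u v < 0 := by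
  set A := normP Ω p u v with hA
  set Q := qTerm Ω q lam mu f g u v with hQ
  set H := hTerm Ω r s h u v with hH
  have hp : (0:ℝ) < p := by linarith
  have hq0 : (0:ℝ) < q := by linarith
  have hrs : (0:ℝ) < r + s := by linarith
  have key : (p - q) * A - (r + s - q) * H > 0 := by
    have := hplus
    unfold psiPair at this
    rw [← hA, ← hQ, ← hH] at this
    nlinarith [this, hNehari]
  have main : Jfun Ω p q r s lam mu f g h u v
      < -((p - q) * (r + s - p) / (p * q * (r + s))) * A := by
    unfold Jfun
    rw [← hA, ← hQ, ← hH]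
    have hQeq : Q = A - H := by linarith
    have hmul : (0:ℝ) < p * q * (r + s) := by positivity
    rw [hQeq, ← mul_lt_mul_iff_of_pos_right hmul]
    field_simp [hp.ne', hq0.ne', hrs.ne']
    have hdiv : -((p - q) * (r + s - p) * A * (p * q * (r + s))) / (p * q * (r + s))
        = -((p - q) * (r + s - p) * A) := by
      field_simp
    nlinarith [key, hpos, mul_pos key hrs]
  refine ⟨main, lt_trans main ?_⟩
  have : 0 < (p - q) * (r + s - p) / (p * q * (r + s)) * A := by
    exact mul_pos (div_pos (mul_pos (by linarith) (by linarith)) (by positivity)) hpos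
  linarith
end
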